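/- arXiv:1612.00421 — 3 statements merged into one kernel-verified Lean document; each statement's English description precedes it below -/
import Mathlib

section
/- Fix 0 < ε < 1 and C₂ > 1, let N be a positive integer, and let L = (L_{ij}) be a random symmetric N×N array with entries in {A, B} whose upper-triangular entries {L_{ij}}_{1 ≤ i ≤ j ≤ N} are mutually independent and satisfy P[L_{ij} = B] ≤ C₂ N^{−1−ε/10} for all i ≤ j. Let Δ be the event that L is inadmissible, that is, that L has at least N^{1−ε/20} deviant indices or that there exist r = ⌈log log N⌉ distinct pairwise connected indices. Then there exist constants c, C > 0, depending only on C₂ and ε, such that P[Δ] < C N^{−c log log N}. -/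
set_option maxHeartbeats 1000000

open MeasureTheory ProbabilityTheory
open scoped Classical ENNReal

noncomputable section

/-- In an AB label (here `true` stands for `B` and `false` for `A`), two indices are
connected if they are joined by a finite chain of consecutively linked indices. -/
def connectedIdx {N : ℕ} (L : Fin N → Fin N → Bool) : Fin N → Fin N → Prop :=
  Relation.ReflTransGen (fun i j => L i j = true)

/-- An index is deviant if it is linked to some index. -/
def deviantIdx {N : ℕ} (L : Fin N → Fin N → Bool) (i : Fin N) : Prop :=
  ∃ j, L i j = true

/-- An AB label is inadmissible if it has at least N^{1-ε/20} deviant indices, or if there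
exist ⌈log log N⌉ distinct pairwise connected indices. -/
def Inadmissible {N : ℕ} (ε : ℝ) (L : Fin N → Fin N → Bool) : Prop :=
  ((N : ℝ) ^ (1 - ε / 20) ≤
      ((Finset.univ.filter (fun i : Fin N => deviantIdx L i)).card : ℝ)) ∨
    (∃ S : Finset (Fin N), S.card = ⌈Real.log (Real.log N)⌉₊ ∧
      ∀ i ∈ S, ∀ j ∈ S, connectedIdx L i j)

/-! ### Auxiliary deterministic lemmas -/

lemma cross_lemma {α : Type*} (e : α → α → Prop) (V : Finset α) :
    ∀ {a b : α}, Relation.ReflTransGen e a b → a ∈ V → b ∉ V →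
      ∃ x ∈ V, ∃ y, y ∉ V ∧ e x y := by
  intro a b h
  induction h with
  | refl => intro h1 h2; exact absurd h1 h2
  | @tail b c hab hbc ih =>
    intro ha hc
    by_cases hb : b ∈ V
    · exact ⟨b, hb, c, hc, hbc⟩
    · exact ih ha hb

/-- The vertex set of a finite set of (ordered) pairs. -/
def vtx {N : ℕ} (T : Finset {p : Fin N × Fin N // p.1 ≤ p.2}) : Finset (Fin N) :=
  T.image (fun q => q.1.1) ∪ T.image (fun q => q.1.2)

lemma tree_extract {N : ℕ} (e : Fin N → Fin N → Prop)
    (hsymm : ∀ i j, e i j → e j i) (S : Finset (Fin N)) (hS : S.Nonempty)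
    (hconn : ∀ i ∈ S, ∀ j ∈ S, Relation.ReflTransGen e i j) :
    ∃ T : Finset {p : Fin N × Fin N // p.1 ≤ p.2},
      T.card = S.card - 1 ∧ (∀ q ∈ T, e q.1.1 q.1.2) ∧ (vtx T).card ≤ S.card := by
  obtain ⟨v₀, hv₀⟩ := hS
  have main : ∀ k, 1 ≤ k → k ≤ S.card →
      ∃ (V : Finset (Fin N)) (T : Finset {p : Fin N × Fin N // p.1 ≤ p.2}),
        v₀ ∈ V ∧ V.card = k ∧ T.card = k - 1 ∧ (∀ q ∈ T, e q.1.1 q.1.2) ∧ vtx T ⊆ V := by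
    intro k
    induction k with
    | zero => omega
    | succ k ih =>
      intro _ hk
      by_cases hk1 : k = 0
      · subst hk1
        exact ⟨{v₀}, ∅, Finset.mem_singleton_self v₀, Finset.card_singleton v₀, rfl,
          by simp, by simp [vtx]⟩
      · obtain ⟨V, T, hv₀V, hVc, hTc, hTe, hvtx⟩ := ih (by omega) (by omega)
        have hScard : V.card < S.card := by omega
        have : ∃ u ∈ S, u ∉ V := by
          by_contra h
          push_neg at h
          exact absurd (Finset.card_le_card h) (by omega)
        obtain ⟨u, huS, huV⟩ := this
        obtain ⟨x, hxV, y, hyV, hxy⟩ :=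
          cross_lemma e V (hconn v₀ hv₀ u huS) hv₀V huV
        have hxyne : x ≠ y := fun h => hyV (h ▸ hxV)
        set q : {p : Fin N × Fin N // p.1 ≤ p.2} :=
          if h : x ≤ y then ⟨(x, y), h⟩ else ⟨(y, x), le_of_not_ge h⟩ with hq
        have hqe : e q.1.1 q.1.2 := by
          by_cases h : x ≤ y
          · simp only [hq, dif_pos h]; exact hxy
          · simp only [hq, dif_neg h]; exact hsymm _ _ hxy
        have hqmem : y ∈ ({q.1.1, q.1.2} : Finset (Fin N)) := by
          by_cases h : x ≤ y <;> simp [hq, h]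
        have hqT : q ∉ T := by
          intro hqT
          have : y ∈ vtx T := by
            rcases Finset.mem_insert.1 hqmem with h | h
            · exact Finset.mem_union_left _ (Finset.mem_image.2 ⟨q, hqT, h.symm⟩)
            · exact Finset.mem_union_right _
                (Finset.mem_image.2 ⟨q, hqT, (Finset.mem_singleton.1 h).symm⟩)
          exact hyV (hvtx this)
        refine ⟨insert y V, insert q T, Finset.mem_insert_of_mem hv₀V, ?_, ?_, ?_, ?_⟩
        · rw [Finset.card_insert_of_notMem hyV, hVc]
        · rw [Finset.card_insert_of_notMem hqT, hTc]; omega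
        · intro q' hq'
          rcases Finset.mem_insert.1 hq' with h | h
          · subst h; exact hqe
          · exact hTe q' h
        · intro z hz
          rcases Finset.mem_union.1 hz with h | h
          · obtain ⟨q', hq', hq'z⟩ := Finset.mem_image.1 h
            rcases Finset.mem_insert.1 hq' with h' | h'
            · subst h'
              by_cases h : x ≤ y
              · simp only [hq, dif_pos h] at hq'z
                exact Finset.mem_insert_of_mem (hq'z ▸ hxV)
              · simp only [hq, dif_neg h] at hq'z
                exact hq'z ▸ Finset.mem_insert_self y V
            · exact Finset.mem_insert_of_mem
                (hvtx (Finset.mem_union_left _ (Finset.mem_image.2 ⟨q', h', hq'z⟩)))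
          · obtain ⟨q', hq', hq'z⟩ := Finset.mem_image.1 h
            rcases Finset.mem_insert.1 hq' with h' | h'
            · subst h'
              by_cases h : x ≤ y
              · simp only [hq, dif_pos h] at hq'z
                exact hq'z ▸ Finset.mem_insert_self y V
              · simp only [hq, dif_neg h] at hq'z
                exact Finset.mem_insert_of_mem (hq'z ▸ hxV)
            · exact Finset.mem_insert_of_mem
                (hvtx (Finset.mem_union_right _ (Finset.mem_image.2 ⟨q', h', hq'z⟩)))
  have hS1 : 1 ≤ S.card := Finset.card_pos.2 ⟨v₀, hv₀⟩
  obtain ⟨V, T, _, hVc, hTc, hTe, hvtx⟩ := main S.card hS1 le_rfl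
  exact ⟨T, hTc, hTe, hVc ▸ Finset.card_le_card hvtx⟩

lemma deviant_extract {N : ℕ} (L : Fin N → Fin N → Bool) (hsymm : ∀ i j, L i j = L j i) :
    (Finset.univ.filter (fun i => deviantIdx L i)).card ≤
      2 * (Finset.univ.filter
        (fun q : {p : Fin N × Fin N // p.1 ≤ p.2} => L q.1.1 q.1.2 = true)).card := by
  classical
  set D := Finset.univ.filter (fun i => deviantIdx L i) with hD
  set f : Fin N → {p : Fin N × Fin N // p.1 ≤ p.2} := fun i =>
    if h : deviantIdx L i then
      (if h2 : i ≤ h.choose then ⟨(i, h.choose), h2⟩ else ⟨(h.choose, i), le_of_not_ge h2⟩)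
    else ⟨(i, i), le_rfl⟩ with hf
  have hfT : ∀ i ∈ D, L (f i).1.1 (f i).1.2 = true := by
    intro i hi
    have h : deviantIdx L i := (Finset.mem_filter.1 hi).2
    have hspec := h.choose_spec
    by_cases h2 : i ≤ h.choose
    · simp only [hf, dif_pos h, dif_pos h2]; exact hspec
    · simp only [hf, dif_pos h, dif_neg h2]; rw [hsymm]; exact hspec
  have hfi : ∀ i, i = (f i).1.1 ∨ i = (f i).1.2 := by
    intro i
    by_cases h : deviantIdx L i
    · by_cases h2 : i ≤ h.choose
      · left; simp [hf, dif_pos h, dif_pos h2]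
      · right; simp [hf, dif_pos h, dif_neg h2]
    · left; simp [hf, dif_neg h]
  have hcard : D.card ≤ 2 * (D.image f).card := by
    apply Finset.card_le_mul_card_image
    intro a _
    calc (D.filter (fun i => f i = a)).card
        ≤ ({a.1.1, a.1.2} : Finset (Fin N)).card := by
          apply Finset.card_le_card
          intro i hi
          obtain ⟨_, hfi2⟩ := Finset.mem_filter.1 hi
          rcases hfi i with h | h
          · exact Finset.mem_insert.2 (Or.inl (by rw [h, hfi2]))
          · refine Finset.mem_insert.2 (Or.inr (Finset.mem_singleton.2 (by rw [h, hfi2])))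
      _ ≤ 2 := Finset.card_insert_le _ _ |>.trans (by simp)
  refine hcard.trans (Nat.mul_le_mul_left 2 (Finset.card_le_card ?_))
  intro q hq
  obtain ⟨i, hi, rfl⟩ := Finset.mem_image.1 hq
  exact Finset.mem_filter.2 ⟨Finset.mem_univ _, hfT i hi⟩

/-! ### Counting lemmas -/

lemma choose_le_two_pow' (n k : ℕ) : n.choose k ≤ 2 ^ n := by
  by_cases h : k ≤ n
  · calc n.choose k ≤ ∑ i ∈ Finset.range (n+1), n.choose i :=
        Finset.single_le_sum (fun i _ => Nat.zero_le _) (Finset.mem_range.2 (by omega))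
      _ = 2^n := Nat.sum_range_choose n
  · simp [Nat.choose_eq_zero_of_lt (show n < k by omega)]

lemma countA2 {N r : ℕ} (hN : 1 ≤ N) :
    (((Finset.univ : Finset {p : Fin N × Fin N // p.1 ≤ p.2}).powersetCard (r-1)).filter
      (fun T => (vtx T).card ≤ r)).card ≤ ((r+1) * N^r) * 2^(r^2) := by
  classical
  set pairsIn : Finset (Fin N) → Finset {p : Fin N × Fin N // p.1 ≤ p.2} :=
    fun V => Finset.univ.filter (fun q => q.1.1 ∈ V ∧ q.1.2 ∈ V) with hpairs
  set 𝒱 := (Finset.univ : Finset (Finset (Fin N))).filter (fun V => V.card ≤ r) with h𝒱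
  have hsub : (((Finset.univ : Finset {p : Fin N × Fin N // p.1 ≤ p.2}).powersetCard
        (r-1)).filter (fun T => (vtx T).card ≤ r)) ⊆
      𝒱.biUnion (fun V => (pairsIn V).powersetCard (r-1)) := by
    intro T hT
    obtain ⟨hT1, hT2⟩ := Finset.mem_filter.1 hT
    have hTcard : T.card = r - 1 := Finset.mem_powersetCard_univ.1 hT1
    refine Finset.mem_biUnion.2 ⟨vtx T, Finset.mem_filter.2 ⟨Finset.mem_univ _, hT2⟩, ?_⟩
    refine Finset.mem_powersetCard.2 ⟨?_, hTcard⟩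
    intro q hq
    refine Finset.mem_filter.2 ⟨Finset.mem_univ _, ?_, ?_⟩
    · exact Finset.mem_union_left _ (Finset.mem_image.2 ⟨q, hq, rfl⟩)
    · exact Finset.mem_union_right _ (Finset.mem_image.2 ⟨q, hq, rfl⟩)
  have hpair_card : ∀ V ∈ 𝒱, (pairsIn V).card ≤ r^2 := by
    intro V hV
    have hVr : V.card ≤ r := (Finset.mem_filter.1 hV).2
    have : (pairsIn V).card ≤ (V ×ˢ V).card := by
      apply Finset.card_le_card_of_injOn (fun q => (q.1.1, q.1.2))
      · intro q hq
        obtain ⟨_, h1, h2⟩ := Finset.mem_filter.1 hq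
        exact Finset.mem_product.2 ⟨h1, h2⟩
      · intro q _ q' _ h
        apply Subtype.ext
        exact Prod.ext (congrArg Prod.fst h) (congrArg Prod.snd h)
    rw [Finset.card_product] at this
    calc (pairsIn V).card ≤ V.card * V.card := this
      _ ≤ r * r := Nat.mul_le_mul hVr hVr
      _ = r^2 := (sq r).symm
  have h𝒱card : 𝒱.card ≤ (r+1) * N^r := by
    have hsub2 : 𝒱 ⊆ (Finset.range (r+1)).biUnion
        (fun k => (Finset.univ : Finset (Fin N)).powersetCard k) := by
      intro V hV
      have hVr : V.card ≤ r := (Finset.mem_filter.1 hV).2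
      exact Finset.mem_biUnion.2 ⟨V.card, Finset.mem_range.2 (by omega),
        Finset.mem_powersetCard_univ.2 rfl⟩
    calc 𝒱.card ≤ _ := Finset.card_le_card hsub2
      _ ≤ ∑ k ∈ Finset.range (r+1), ((Finset.univ : Finset (Fin N)).powersetCard k).card :=
        Finset.card_biUnion_le
      _ ≤ ∑ _k ∈ Finset.range (r+1), N^r := by
        apply Finset.sum_le_sum
        intro k hk
        rw [Finset.card_powersetCard, Finset.card_univ, Fintype.card_fin]
        calc N.choose k ≤ N^k := Nat.choose_le_pow N k
          _ ≤ N^r := Nat.pow_le_pow_right hN (by have := Finset.mem_range.1 hk; omega)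
      _ = (r+1) * N^r := by rw [Finset.sum_const, Finset.card_range, smul_eq_mul]
  calc _ ≤ (𝒱.biUnion (fun V => (pairsIn V).powersetCard (r-1))).card :=
      Finset.card_le_card hsub
    _ ≤ ∑ V ∈ 𝒱, ((pairsIn V).powersetCard (r-1)).card := Finset.card_biUnion_le
    _ ≤ ∑ _V ∈ 𝒱, 2^(r^2) := by
      apply Finset.sum_le_sum
      intro V hV
      rw [Finset.card_powersetCard]
      calc ((pairsIn V).card).choose (r-1) ≤ 2^((pairsIn V).card) := choose_le_two_pow' _ _
        _ ≤ 2^(r^2) := Nat.pow_le_pow_right (by norm_num) (hpair_card V hV)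
    _ = 𝒱.card * 2^(r^2) := by rw [Finset.sum_const, smul_eq_mul]
    _ ≤ ((r+1) * N^r) * 2^(r^2) := Nat.mul_le_mul_right _ h𝒱card

/-! ### Analytic lemmas -/

lemma third_pow_le_factorial (k : ℕ) : ((k : ℝ)/3)^k ≤ (k.factorial : ℝ) := by
  induction k with
  | zero => simp
  | succ k ih =>
    rcases Nat.eq_zero_or_pos k with rfl | hk
    · norm_num
    · have hk' : (0:ℝ) < k := by positivity
      have h3 : (1 + 1/(k:ℝ))^k ≤ 3 := by
        have h2 : (1 + 1/(k:ℝ)) ≤ Real.exp (1/k) := by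
          have := Real.add_one_le_exp (1/(k:ℝ)); linarith
        calc (1 + 1/(k:ℝ))^k ≤ (Real.exp (1/k))^k :=
            pow_le_pow_left₀ (by positivity) h2 k
          _ = Real.exp 1 := by
            rw [← Real.exp_nat_mul]; congr 1; field_simp
          _ ≤ 3 := by have := Real.exp_one_lt_d9; linarith
      have e1 : (((k:ℝ)+1)/3) = ((k:ℝ)/3) * (1 + 1/k) := by field_simp
      have key : (((k:ℝ)+1)/3)^(k+1) ≤ ((k:ℝ)+1) * ((k:ℝ)/3)^k := by
        rw [pow_succ, e1, mul_pow]
        have hnn : (0:ℝ) ≤ ((k:ℝ)/3)^k := by positivity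
        calc ((k:ℝ)/3)^k * (1 + 1/(k:ℝ))^k * (((k:ℝ)/3) * (1 + 1/k))
            ≤ ((k:ℝ)/3)^k * 3 * (((k:ℝ)/3) * (1 + 1/k)) := by
              apply mul_le_mul_of_nonneg_right
              · exact mul_le_mul_of_nonneg_left h3 hnn
              · positivity
          _ = ((k:ℝ)/3)^k * (((k:ℝ)) * (1 + 1/k)) := by ring
          _ = ((k:ℝ)/3)^k * ((k:ℝ)+1) := by
              congr 1
              field_simp
          _ = ((k:ℝ)+1) * ((k:ℝ)/3)^k := by ring
      calc ((((k+1):ℕ):ℝ)/3)^(k+1) = (((k:ℝ)+1)/3)^(k+1) := by push_cast; ring_nf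
        _ ≤ ((k:ℝ)+1) * ((k:ℝ)/3)^k := key
        _ ≤ ((k:ℝ)+1) * (k.factorial : ℝ) := by
            apply mul_le_mul_of_nonneg_left ih (by positivity)
        _ = (((k+1).factorial : ℕ) : ℝ) := by
            rw [Nat.factorial_succ]; push_cast; ring

/-- Numeric bound for the many-deviant-indices event. -/
lemma bound_one_core (ε C₂ n l lam : ℝ) (N M m₁ m₂ : ℕ)
    (hε0 : 0 < ε) (hε1 : ε < 1) (hC₂ : 1 < C₂)
    (hn : n = (N:ℝ)) (hl : l = Real.log n) (hlam : lam = Real.log l)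
    (hm₁ : m₁ = ⌈n^(1-ε/20)⌉₊) (hm₂ : m₂ = m₁/2)
    (hM : M ≤ N^2) (hN3 : 3 ≤ N)
    (hE2 : 12*C₂ ≤ n^(ε/40)) (hE3 : 2 ≤ n^(1-ε/20))
    (hE5 : 8/((1-ε/20)/2) ≤ n^((1-ε/20)/2)) :
    (M.choose m₂ : ℝ) * (C₂ * n^(-(1:ℝ)-ε/10))^m₂ ≤ 1/2 * n^(-(ε/40 * lam)) := by
  have hδ0 : 0 < (1-ε/20)/2 := by linarith
  have hn3 : (3:ℝ) ≤ n := by rw [hn]; exact_mod_cast hN3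
  have hn0 : 0 < n := by linarith
  have hn1 : (1:ℝ) ≤ n := by linarith
  have hl1 : 1 < l := by
    have h3 : Real.exp 1 < n := lt_of_lt_of_le (by linarith [Real.exp_one_lt_d9]) hn3
    have h4 := Real.log_lt_log (Real.exp_pos 1) h3
    rw [Real.log_exp] at h4
    rw [hl]; exact h4
  have hl0 : 0 < l := by linarith
  have hrp0 : 0 < n^(-(1:ℝ)-ε/10) := Real.rpow_pos_of_pos hn0 _
  have hp0 : 0 < C₂ * n^(-(1:ℝ)-ε/10) := by positivity
  have hm₁R : n^(1-ε/20) ≤ (m₁:ℝ) := by rw [hm₁]; exact Nat.le_ceil _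
  have hm₁2 : 2 ≤ m₁ := by
    have h : (2:ℝ) ≤ (m₁:ℝ) := le_trans hE3 hm₁R
    exact_mod_cast h
  have hm₂1 : 1 ≤ m₂ := by omega
  have hm₂0R : (0:ℝ) < (m₂:ℝ) := by exact_mod_cast hm₂1
  have hm₂R : n^(1-ε/20)/4 ≤ (m₂:ℝ) := by
    have h1 : (m₁:ℝ) ≤ 2*(m₂:ℝ) + 1 := by exact_mod_cast (by omega : m₁ ≤ 2*m₂ + 1)
    linarith
  have hnδ0 : (0:ℝ) < n^((1-ε/20)/2) := Real.rpow_pos_of_pos hn0 _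
  have hδδ : n^((1-ε/20)/2) * n^((1-ε/20)/2) = n^(1-ε/20) := by
    rw [← Real.rpow_add hn0]; congr 1; ring
  have h4 : 4*(lam+1) ≤ n^(1-ε/20) := by
    have hlaml : lam ≤ l - 1 := by rw [hlam]; exact Real.log_le_sub_one_of_pos hl0
    have hlr : l ≤ n^((1-ε/20)/2)/((1-ε/20)/2) := by
      rw [hl]; exact Real.log_le_rpow_div hn0.le hδ0
    have h48 : (4:ℝ)/((1-ε/20)/2) ≤ 8/((1-ε/20)/2) := by
      have h4δ : (0:ℝ) < 4/((1-ε/20)/2) := by positivity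
      have heq : (8:ℝ)/((1-ε/20)/2) - 4/((1-ε/20)/2) = 4/((1-ε/20)/2) := by ring
      linarith
    calc 4*(lam+1) ≤ 4*l := by linarith
      _ ≤ 4*(n^((1-ε/20)/2)/((1-ε/20)/2)) := by linarith
      _ = (4/((1-ε/20)/2))*n^((1-ε/20)/2) := by ring
      _ ≤ (8/((1-ε/20)/2))*n^((1-ε/20)/2) := mul_le_mul_of_nonneg_right h48 hnδ0.le
      _ ≤ n^((1-ε/20)/2) * n^((1-ε/20)/2) := mul_le_mul_of_nonneg_right hE5 hnδ0.le
      _ = n^(1-ε/20) := hδδ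
  have hm₂lam : lam + 1 ≤ (m₂:ℝ) := by linarith
  have hM2 : (M:ℝ) ≤ n^(2:ℝ) := by
    rw [hn, show (2:ℝ) = ((2:ℕ):ℝ) by norm_num, Real.rpow_natCast]
    exact_mod_cast hM
  have hfactor : (M:ℝ)/((m₂:ℝ)/3)*(C₂ * n^(-(1:ℝ)-ε/10)) ≤ n^(-(ε/40)) := by
    have hd : (M:ℝ)/((m₂:ℝ)/3) ≤ n^(2:ℝ)/(n^(1-ε/20)/12) := by
      apply div_le_div₀ (by positivity) hM2 (by positivity)
      linarith
    have he : n^(2:ℝ)/(n^(1-ε/20)/12) = 12 * n^(1+ε/20) := by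
      rw [div_div_eq_mul_div, mul_comm, mul_div_assoc, ← Real.rpow_sub hn0]
      congr 2
      ring
    calc (M:ℝ)/((m₂:ℝ)/3)*(C₂ * n^(-(1:ℝ)-ε/10))
        ≤ (12*n^(1+ε/20))*(C₂ * n^(-(1:ℝ)-ε/10)) := by
          apply mul_le_mul_of_nonneg_right _ hp0.le
          rw [← he]; exact hd
      _ = 12*C₂ * (n^(1+ε/20) * n^(-(1:ℝ)-ε/10)) := by ring
      _ = 12*C₂ * n^(-(ε/20)) := by
          rw [← Real.rpow_add hn0]
          congr 2
          ring
      _ ≤ n^(ε/40) * n^(-(ε/20)) :=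
          mul_le_mul_of_nonneg_right hE2 (Real.rpow_pos_of_pos hn0 _).le
      _ = n^(-(ε/40)) := by rw [← Real.rpow_add hn0]; congr 1; ring
  have hm₂ne : (m₂:ℝ) ≠ 0 := ne_of_gt hm₂0R
  calc (M.choose m₂ : ℝ) * (C₂ * n^(-(1:ℝ)-ε/10))^m₂
      ≤ ((M:ℝ)^m₂/(m₂.factorial:ℝ)) * (C₂ * n^(-(1:ℝ)-ε/10))^m₂ := by
        apply mul_le_mul_of_nonneg_right _ (pow_nonneg hp0.le _)
        have h := Nat.choose_le_pow_div (α := ℝ) m₂ M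
        push_cast at h ⊢
        exact h
    _ ≤ ((M:ℝ)^m₂/((m₂:ℝ)/3)^m₂) * (C₂ * n^(-(1:ℝ)-ε/10))^m₂ := by
        apply mul_le_mul_of_nonneg_right _ (pow_nonneg hp0.le _)
        exact div_le_div_of_nonneg_left (by positivity) (by positivity)
          (third_pow_le_factorial m₂)
    _ = ((M:ℝ)/((m₂:ℝ)/3)*(C₂ * n^(-(1:ℝ)-ε/10)))^m₂ := by
        rw [mul_pow, mul_pow, div_pow, div_pow]
        ring_nf <;> simp only [inv_inv, one_div] <;> ring
    _ ≤ (n^(-(ε/40)))^m₂ := pow_le_pow_left₀ (by positivity) hfactor m₂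
    _ = n^(-(ε/40)*(m₂:ℝ)) := by
        rw [← Real.rpow_natCast (n^(-(ε/40))) m₂, ← Real.rpow_mul hn0.le]
    _ ≤ n^(-(ε/40)*(lam+1)) := by
        apply Real.rpow_le_rpow_of_exponent_le hn1
        linarith only [mul_nonneg hε0.le (sub_nonneg.2 hm₂lam)]
    _ = n^(-(ε/40)) * n^(-(ε/40*lam)) := by rw [← Real.rpow_add hn0]; congr 1; ring
    _ ≤ 1/2 * n^(-(ε/40*lam)) := by
        apply mul_le_mul_of_nonneg_right _ (Real.rpow_nonneg hn0.le _)
        rw [Real.rpow_neg hn0.le]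
        have h2 : (2:ℝ) ≤ n^(ε/40) := by linarith
        calc (n^(ε/40))⁻¹ ≤ 2⁻¹ := inv_anti₀ (by norm_num) h2
          _ = 1/2 := by norm_num

/-- Numeric bound for the connected-cluster event. -/
lemma bound_two_core (ε C₂ n l lam : ℝ) (N A r : ℕ)
    (hε0 : 0 < ε) (hε1 : ε < 1) (hC₂ : 1 < C₂)
    (hn : n = (N:ℝ)) (hl : l = Real.log n) (hlam : lam = Real.log l) (hr : r = ⌈lam⌉₊)
    (hN3 : 3 ≤ N)
    (hlamR : 2 + 80/ε + 1280*(5 + Real.log C₂)/ε ≤ lam)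
    (hA : A ≤ (r + 1) * N^r * 2^(r^2)) :
    (A:ℝ) * (C₂ * n^(-(1:ℝ)-ε/10))^(r-1) ≤ 1/2 * n^(-(ε/40 * lam)) := by
  have hC₂0 : (0:ℝ) < C₂ := by linarith
  have hlogC₂ : 0 < Real.log C₂ := Real.log_pos hC₂
  have hn3 : (3:ℝ) ≤ n := by rw [hn]; exact_mod_cast hN3
  have hn0 : 0 < n := by linarith
  have hn1 : (1:ℝ) ≤ n := by linarith
  have hl1 : 1 < l := by
    have h3 : Real.exp 1 < n := lt_of_lt_of_le (by linarith [Real.exp_one_lt_d9]) hn3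
    have h4 := Real.log_lt_log (Real.exp_pos 1) h3
    rw [Real.log_exp] at h4
    rw [hl]; exact h4
  have hl0 : 0 < l := by linarith
  have h80 : 0 < 80/ε := by positivity
  have h1280 : 0 < 1280*(5 + Real.log C₂)/ε := by
    apply div_pos _ hε0
    nlinarith
  have hlam2 : 2 ≤ lam := by linarith
  have hRlam : lam ≤ (r:ℝ) := by rw [hr]; exact Nat.le_ceil lam
  have hRlam1 : (r:ℝ) ≤ lam + 1 := by
    rw [hr]; exact (Nat.ceil_lt_add_one (by linarith)).le
  have hR2 : (2:ℝ) ≤ (r:ℝ) := by linarith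
  have hr2 : 2 ≤ r := by exact_mod_cast hR2
  have hR0 : (0:ℝ) < (r:ℝ) := by linarith
  have hεR : 80 ≤ ε*(r:ℝ) := by
    have h1 : 80/ε ≤ (r:ℝ) := by linarith
    rw [div_le_iff₀ hε0] at h1
    linarith
  have hlexp : Real.exp ((r:ℝ)-1) ≤ l := by
    have h1 : (r:ℝ)-1 ≤ lam := by linarith
    calc Real.exp ((r:ℝ)-1) ≤ Real.exp lam := Real.exp_le_exp.2 h1
      _ = l := by rw [hlam]; exact Real.exp_log hl0
  have hsq : ((r:ℝ)-1)^2/4 ≤ Real.exp ((r:ℝ)-1) := by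
    have h := Real.add_one_le_exp (((r:ℝ)-1)/2)
    have hexpand : Real.exp ((r:ℝ)-1) = Real.exp (((r:ℝ)-1)/2) * Real.exp (((r:ℝ)-1)/2) := by
      rw [← Real.exp_add]; congr 1; ring
    have hx : (0:ℝ) ≤ ((r:ℝ)-1)/2 + 1 := by linarith
    have hsq2 := mul_le_mul h h hx (Real.exp_pos (((r:ℝ)-1)/2)).le
    linarith only [hsq2, hR2, hexpand.le, hexpand.ge]
  have hl16 : (r:ℝ)^2/16 ≤ l := by
    have hprod : (0:ℝ) ≤ (3*(r:ℝ)-2)*((r:ℝ)-2) :=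
      mul_nonneg (by linarith) (by linarith)
    linarith only [hlexp, hsq, hprod]
  have hR1280 : 1280*(5 + Real.log C₂)/ε ≤ (r:ℝ) := by linarith
  have hKR : (5 + Real.log C₂)*(r:ℝ) ≤ ε/80*l := by
    rw [div_le_iff₀ hε0] at hR1280
    have t1 := mul_le_mul_of_nonneg_left hl16 (by positivity : (0:ℝ) ≤ ε/80)
    have t2 := mul_le_mul_of_nonneg_right hR1280 hR0.le
    nlinarith [t1, t2]
  have hlog2 : Real.log 2 ≤ 1 := by
    have := Real.log_le_sub_one_of_pos (by norm_num : (0:ℝ) < 2)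
    linarith
  have hlog2pos : 0 < Real.log 2 := Real.log_pos one_lt_two
  have hrp0 : 0 < n^(-(1:ℝ)-ε/10) := Real.rpow_pos_of_pos hn0 _
  have hp0 : 0 < C₂ * n^(-(1:ℝ)-ε/10) := by positivity
  have hAR : (A:ℝ) ≤ ((r:ℝ)+1) * n^(r:ℕ) * (2:ℝ)^(r^2:ℕ) := by
    rw [hn]
    exact_mod_cast hA
  have hx2 : n^(r:ℕ) = Real.exp (l*(r:ℝ)) := by
    rw [hl, ← Real.rpow_natCast n r, Real.rpow_def_of_pos hn0]
  have hx3 : ((2:ℝ))^(r^2:ℕ) = Real.exp ((r^2:ℕ) * Real.log 2) := by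
    rw [Real.exp_nat_mul, Real.exp_log (by norm_num : (0:ℝ) < 2)]
  have hx4 : (C₂ * n^(-(1:ℝ)-ε/10))^(r-1:ℕ)
      = Real.exp (((r-1:ℕ):ℝ) * (Real.log C₂ + l*(-(1:ℝ)-ε/10))) := by
    rw [hl, Real.exp_nat_mul, Real.exp_add, Real.exp_log hC₂0,
      ← Real.rpow_def_of_pos hn0]
  have hcast1 : ((r-1:ℕ):ℝ) = (r:ℝ)-1 := by
    rw [Nat.cast_sub (by omega)]; norm_num
  have hcast2 : ((r^2:ℕ):ℝ) = (r:ℝ)^2 := by push_cast; ring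
  calc (A:ℝ) * (C₂ * n^(-(1:ℝ)-ε/10))^(r-1)
      ≤ (((r:ℝ)+1) * n^(r:ℕ) * (2:ℝ)^(r^2:ℕ)) * (C₂ * n^(-(1:ℝ)-ε/10))^(r-1) :=
        mul_le_mul_of_nonneg_right hAR (pow_nonneg hp0.le _)
    _ ≤ (Real.exp (r:ℝ) * n^(r:ℕ) * (2:ℝ)^(r^2:ℕ)) * (C₂ * n^(-(1:ℝ)-ε/10))^(r-1) := by
        apply mul_le_mul_of_nonneg_right _ (pow_nonneg hp0.le _)
        apply mul_le_mul_of_nonneg_right _ (by positivity)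
        apply mul_le_mul_of_nonneg_right (Real.add_one_le_exp (r:ℝ))
          (by rw [hx2]; positivity)
    _ = Real.exp ((r:ℝ) + l*(r:ℝ) + ((r^2:ℕ):ℝ)*Real.log 2 +
          ((r-1:ℕ):ℝ) * (Real.log C₂ + l*(-(1:ℝ)-ε/10))) := by
        rw [hx2, hx3, hx4, ← Real.exp_add, ← Real.exp_add, ← Real.exp_add]
    _ ≤ Real.exp (-Real.log 2 + l * (-(ε/40*lam))) := by
        apply Real.exp_le_exp.2
        rw [hcast1, hcast2]
        have d1 : ε/40*(lam*l) ≤ ε/40*((r:ℝ)*l) := by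
          apply mul_le_mul_of_nonneg_left _ (by positivity)
          exact mul_le_mul_of_nonneg_right hRlam hl0.le
        have d2 : ε/20*((r:ℝ)*l) ≤ ε/10*(((r:ℝ)-1)*l) := by
          linarith only [mul_nonneg (mul_nonneg hε0.le hl0.le) (sub_nonneg.2 hR2)]
        have d3 : l ≤ ε/80*((r:ℝ)*l) := by
          linarith only [mul_nonneg (sub_nonneg.2 hεR) hl0.le]
        have d4 : (5 + Real.log C₂)*(r:ℝ)^2 ≤ ε/80*((r:ℝ)*l) := by
          have t := mul_le_mul_of_nonneg_right hKR hR0.le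
          linarith only [t]
        have c1 : (r:ℝ) ≤ (r:ℝ)^2 := by
          have t := mul_nonneg hR0.le (by linarith : (0:ℝ) ≤ (r:ℝ)-1)
          linarith only [t]
        have c2 : Real.log 2 ≤ (r:ℝ)^2 := by
          linarith only [sq_nonneg ((r:ℝ)-2), hR2, hlog2]
        have c3 : (r:ℝ)^2*Real.log 2 ≤ (r:ℝ)^2 := by
          have t := mul_nonneg (by linarith : (0:ℝ) ≤ 1 - Real.log 2) (sq_nonneg (r:ℝ))
          linarith only [t]
        have c4 : ((r:ℝ)-1)*Real.log C₂ ≤ (r:ℝ)^2*Real.log C₂ := by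
          apply mul_le_mul_of_nonneg_right _ hlogC₂.le
          linarith only [c1]
        have d5 : (r:ℝ) + Real.log 2 + l + (r:ℝ)^2*Real.log 2 + ((r:ℝ)-1)*Real.log C₂
            ≤ (5 + Real.log C₂)*(r:ℝ)^2 + l := by
          linarith only [c1, c2, c3, c4, sq_nonneg (r:ℝ)]
        linarith only [d1, d2, d3, d4, d5]
    _ = 1/2 * n^(-(ε/40*lam)) := by
        rw [Real.exp_add, Real.exp_neg, Real.exp_log (by norm_num : (0:ℝ) < 2), hl,
          ← Real.rpow_def_of_pos hn0]
        norm_num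

/-! ### Probability lemma -/

lemma prob_inter {Ω : Type} [mΩ : MeasurableSpace Ω] (μ : Measure Ω) [IsProbabilityMeasure μ]
    {N : ℕ} (L : Ω → Fin N → Fin N → Bool)
    (hIndep : iIndepFun
      (fun (p : {p : Fin N × Fin N // p.1 ≤ p.2}) ω => L ω p.1.1 p.1.2) μ)
    {p : ℝ} (hp0 : 0 ≤ p)
    (hp : ∀ i j : Fin N, i ≤ j → (μ {ω | L ω i j = true}).toReal ≤ p)
    (T : Finset {p : Fin N × Fin N // p.1 ≤ p.2}) :
    (μ (⋂ q ∈ T, {ω | L ω q.1.1 q.1.2 = true})).toReal ≤ p ^ T.card := by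
  have h := hIndep.meas_biInter (S := T)
    (s := fun q => {ω | L ω q.1.1 q.1.2 = true}) ?_
  · rw [h, ENNReal.toReal_prod]
    calc ∏ q ∈ T, (μ {ω | L ω q.1.1 q.1.2 = true}).toReal
        ≤ ∏ _q ∈ T, p := by
          apply Finset.prod_le_prod
          · intro q _; exact ENNReal.toReal_nonneg
          · intro q _; exact hp q.1.1 q.1.2 q.2
      _ = p ^ T.card := Finset.prod_const p
  · intro q _
    exact MeasurableSpace.measurableSet_comap.2 ⟨{true}, trivial, rfl⟩

/-! ### Main theorem -/

theorem inadmissible_label_unlikely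
    (ε C₂ : ℝ) (hε0 : 0 < ε) (hε1 : ε < 1) (hC₂ : 1 < C₂) :
    ∃ c C : ℝ, 0 < c ∧ 0 < C ∧
      ∀ (N : ℕ), 0 < N →
      ∀ (Ω : Type) (mΩ : MeasurableSpace Ω) (μ : Measure Ω), IsProbabilityMeasure μ →
      ∀ L : Ω → Fin N → Fin N → Bool,
        (∀ ω i j, L ω i j = L ω j i) →
        (∀ i j, Measurable fun ω => L ω i j) →
        iIndepFun
          (fun (p : {p : Fin N × Fin N // p.1 ≤ p.2}) ω => L ω p.1.1 p.1.2) μ →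
        (∀ i j : Fin N, i ≤ j →
          (μ {ω | L ω i j = true}).toReal ≤ C₂ * (N : ℝ) ^ (-(1 : ℝ) - ε / 10)) →
        (μ {ω | Inadmissible ε (L ω)}).toReal <
          C * (N : ℝ) ^ (-(c * Real.log (Real.log N))) := by
  classical
  have hlogC₂ : 0 < Real.log C₂ := Real.log_pos hC₂
  -- eventual conditions
  have hev : ∀ᶠ (M : ℕ) in Filter.atTop,
      (2 + 80/ε + 1280*(5 + Real.log C₂)/ε ≤ Real.log (Real.log M) ∧
       12*C₂ ≤ (M:ℝ)^(ε/40)) ∧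
      (2 ≤ (M:ℝ)^(1-ε/20) ∧
       8/((1-ε/20)/2) ≤ (M:ℝ)^((1-ε/20)/2)) := by
    have hc40 : (0:ℝ) < ε/40 := by linarith
    have hc20 : (0:ℝ) < 1-ε/20 := by linarith
    have hcδ : (0:ℝ) < (1-ε/20)/2 := by linarith
    have t0 : Filter.Tendsto (fun M : ℕ => (M:ℝ)) Filter.atTop Filter.atTop :=
      tendsto_natCast_atTop_atTop
    have t1 : Filter.Tendsto (fun M : ℕ => Real.log (Real.log M)) Filter.atTop Filter.atTop :=
      (Real.tendsto_log_atTop.comp Real.tendsto_log_atTop).comp t0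
    have t2 : Filter.Tendsto (fun M : ℕ => (M:ℝ)^(ε/40)) Filter.atTop Filter.atTop :=
      (tendsto_rpow_atTop hc40).comp t0
    have t3 : Filter.Tendsto (fun M : ℕ => (M:ℝ)^(1-ε/20)) Filter.atTop Filter.atTop :=
      (tendsto_rpow_atTop hc20).comp t0
    have t4 : Filter.Tendsto (fun M : ℕ => (M:ℝ)^((1-ε/20)/2)) Filter.atTop Filter.atTop :=
      (tendsto_rpow_atTop hcδ).comp t0
    filter_upwards [t1.eventually_ge_atTop (2 + 80/ε + 1280*(5 + Real.log C₂)/ε),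
      t2.eventually_ge_atTop (12*C₂), t3.eventually_ge_atTop 2,
      t4.eventually_ge_atTop (8/((1-ε/20)/2))] with M h1 h2 h3 h4
    exact ⟨⟨h1, h2⟩, h3, h4⟩
  obtain ⟨N₁, hN₁⟩ := Filter.eventually_atTop.1 hev
  refine ⟨ε/40, ((max N₁ 3 : ℕ):ℝ)^(ε/40 * Real.log (Real.log (max N₁ 3 : ℕ))) + 2,
    by linarith, ?_, ?_⟩
  · have := Real.rpow_nonneg (show (0:ℝ) ≤ ((max N₁ 3 : ℕ):ℝ) by positivity)
      (ε/40 * Real.log (Real.log (max N₁ 3 : ℕ)))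
    linarith
  intro N hN Ω mΩ μ hμ L hLsymm hLmeas hIndep hLp
  haveI := hμ
  have hN₀3 : 3 ≤ max N₁ 3 := le_max_right _ _
  have hCge2 : 2 ≤ ((max N₁ 3 : ℕ):ℝ)^(ε/40 * Real.log (Real.log (max N₁ 3 : ℕ))) + 2 := by
    have := Real.rpow_nonneg (show (0:ℝ) ≤ ((max N₁ 3 : ℕ):ℝ) by positivity)
      (ε/40 * Real.log (Real.log (max N₁ 3 : ℕ)))
    linarith
  have hn1 : (1:ℝ) ≤ (N:ℝ) := by exact_mod_cast hN
  by_cases hNbig : max N₁ 3 ≤ N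
  · -- main case: N large
    obtain ⟨⟨hE1, hE2⟩, hE3, hE5⟩ := hN₁ N (le_trans (le_max_left _ _) hNbig)
    have hN3 : 3 ≤ N := le_trans hN₀3 hNbig
    set r : ℕ := ⌈Real.log (Real.log N)⌉₊ with hr_def
    set m₂ : ℕ := ⌈(N:ℝ)^(1-ε/20)⌉₊ / 2 with hm₂_def
    have hp0 : (0:ℝ) ≤ C₂ * (N:ℝ)^(-(1:ℝ)-ε/10) := by positivity
    have hr2 : 2 ≤ r := by
      have h80 : 0 < 80/ε := by positivity
      have h1280 : 0 < 1280*(5 + Real.log C₂)/ε := by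
        apply div_pos _ hε0
        nlinarith
      have hlam2 : (2:ℝ) ≤ Real.log (Real.log N) := by linarith
      have : (2:ℝ) ≤ (r:ℝ) := le_trans hlam2 (by rw [hr_def]; exact Nat.le_ceil _)
      exact_mod_cast this
    set 𝒜₁ : Finset (Finset {p : Fin N × Fin N // p.1 ≤ p.2}) :=
      Finset.univ.powersetCard m₂ with h𝒜₁
    set 𝒜₂ : Finset (Finset {p : Fin N × Fin N // p.1 ≤ p.2}) :=
      (Finset.univ.powersetCard (r-1)).filter (fun T => (vtx T).card ≤ r) with h𝒜₂
    have hU : ∀ 𝒜 : Finset (Finset {p : Fin N × Fin N // p.1 ≤ p.2}),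
        (μ (⋃ T ∈ 𝒜, ⋂ q ∈ T, {ω | L ω q.1.1 q.1.2 = true})).toReal
          ≤ ∑ T ∈ 𝒜, (C₂ * (N:ℝ)^(-(1:ℝ)-ε/10)) ^ T.card := by
      intro 𝒜
      have h1 := measure_biUnion_finset_le (μ := μ) 𝒜
        (fun T => ⋂ q ∈ T, {ω | L ω q.1.1 q.1.2 = true})
      have h2 : (∑ T ∈ 𝒜, μ (⋂ q ∈ T, {ω | L ω q.1.1 q.1.2 = true})) ≠ ⊤ :=
        ENNReal.sum_ne_top.2 fun T _ => measure_ne_top μ _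
      calc (μ (⋃ T ∈ 𝒜, ⋂ q ∈ T, {ω | L ω q.1.1 q.1.2 = true})).toReal
          ≤ (∑ T ∈ 𝒜, μ (⋂ q ∈ T, {ω | L ω q.1.1 q.1.2 = true})).toReal :=
            ENNReal.toReal_mono h2 h1
        _ = ∑ T ∈ 𝒜, (μ (⋂ q ∈ T, {ω | L ω q.1.1 q.1.2 = true})).toReal :=
            ENNReal.toReal_sum fun T _ => measure_ne_top μ _
        _ ≤ ∑ T ∈ 𝒜, (C₂ * (N:ℝ)^(-(1:ℝ)-ε/10)) ^ T.card :=
            Finset.sum_le_sum fun T _ => prob_inter μ L hIndep hp0 hLp T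
    have hincl : {ω | Inadmissible ε (L ω)} ⊆
        (⋃ T ∈ 𝒜₁, ⋂ q ∈ T, {ω | L ω q.1.1 q.1.2 = true}) ∪
        (⋃ T ∈ 𝒜₂, ⋂ q ∈ T, {ω | L ω q.1.1 q.1.2 = true}) := by
      intro ω hω
      rcases hω with hdev | ⟨S, hScard, hSconn⟩
      · -- many deviant indices
        have hm₁le : ⌈(N:ℝ)^(1-ε/20)⌉₊ ≤
            (Finset.univ.filter (fun i => deviantIdx (L ω) i)).card :=
          Nat.ceil_le.2 hdev
        have hTE := deviant_extract (L ω) (hLsymm ω)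
        have hm₂le : m₂ ≤ (Finset.univ.filter
            (fun q : {p : Fin N × Fin N // p.1 ≤ p.2} => L ω q.1.1 q.1.2 = true)).card := by
          rw [hm₂_def]; omega
        obtain ⟨T, hTsub, hTcard⟩ := Finset.exists_subset_card_eq hm₂le
        refine Set.mem_union_left _ (Set.mem_iUnion₂.2 ⟨T, ?_, ?_⟩)
        · rw [h𝒜₁]; exact Finset.mem_powersetCard_univ.2 hTcard
        · exact Set.mem_iInter₂.2 fun q hq => (Finset.mem_filter.1 (hTsub hq)).2
      · -- a connected cluster
        have hSne : S.Nonempty := Finset.card_pos.1 (by rw [hScard, ← hr_def]; omega)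
        obtain ⟨T, hTcard, hTe, hTvtx⟩ := tree_extract (fun i j => L ω i j = true)
          (fun i j h => (hLsymm ω j i).trans h) S hSne hSconn
        refine Set.mem_union_right _ (Set.mem_iUnion₂.2
          ⟨T, ?_, Set.mem_iInter₂.2 fun q hq => hTe q hq⟩)
        rw [h𝒜₂]
        refine Finset.mem_filter.2 ⟨Finset.mem_powersetCard_univ.2 ?_, ?_⟩
        · rw [hTcard, hScard, ← hr_def]
        · exact le_trans hTvtx (le_of_eq (by rw [hScard, ← hr_def]))
    have hsplit : (μ {ω | Inadmissible ε (L ω)}).toReal ≤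
        (∑ T ∈ 𝒜₁, (C₂ * (N:ℝ)^(-(1:ℝ)-ε/10)) ^ T.card) +
        (∑ T ∈ 𝒜₂, (C₂ * (N:ℝ)^(-(1:ℝ)-ε/10)) ^ T.card) := by
      have hm := measure_mono (μ := μ) hincl
      have hu := measure_union_le (μ := μ)
        (⋃ T ∈ 𝒜₁, ⋂ q ∈ T, {ω | L ω q.1.1 q.1.2 = true})
        (⋃ T ∈ 𝒜₂, ⋂ q ∈ T, {ω | L ω q.1.1 q.1.2 = true})
      have hfin : μ (⋃ T ∈ 𝒜₁, ⋂ q ∈ T, {ω | L ω q.1.1 q.1.2 = true}) +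
          μ (⋃ T ∈ 𝒜₂, ⋂ q ∈ T, {ω | L ω q.1.1 q.1.2 = true}) ≠ ⊤ :=
        ENNReal.add_ne_top.2 ⟨measure_ne_top μ _, measure_ne_top μ _⟩
      calc (μ {ω | Inadmissible ε (L ω)}).toReal
          ≤ (μ (⋃ T ∈ 𝒜₁, ⋂ q ∈ T, {ω | L ω q.1.1 q.1.2 = true}) +
             μ (⋃ T ∈ 𝒜₂, ⋂ q ∈ T, {ω | L ω q.1.1 q.1.2 = true})).toReal :=
            ENNReal.toReal_mono hfin (le_trans hm hu)
        _ = (μ (⋃ T ∈ 𝒜₁, ⋂ q ∈ T, {ω | L ω q.1.1 q.1.2 = true})).toReal +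
            (μ (⋃ T ∈ 𝒜₂, ⋂ q ∈ T, {ω | L ω q.1.1 q.1.2 = true})).toReal :=
            ENNReal.toReal_add (measure_ne_top μ _) (measure_ne_top μ _)
        _ ≤ _ := add_le_add (hU 𝒜₁) (hU 𝒜₂)
    have hsum1 : ∑ T ∈ 𝒜₁, (C₂ * (N:ℝ)^(-(1:ℝ)-ε/10)) ^ T.card
        = ((Fintype.card {p : Fin N × Fin N // p.1 ≤ p.2}).choose m₂ : ℝ) *
          (C₂ * (N:ℝ)^(-(1:ℝ)-ε/10)) ^ m₂ := by
      have hc : ∀ T ∈ 𝒜₁, (C₂ * (N:ℝ)^(-(1:ℝ)-ε/10)) ^ T.card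
          = (C₂ * (N:ℝ)^(-(1:ℝ)-ε/10)) ^ m₂ := by
        intro T hT
        rw [Finset.mem_powersetCard_univ.1 (by rwa [h𝒜₁] at hT)]
      rw [Finset.sum_congr rfl hc, Finset.sum_const, nsmul_eq_mul, h𝒜₁,
        Finset.card_powersetCard, Finset.card_univ]
    have hsum2 : ∑ T ∈ 𝒜₂, (C₂ * (N:ℝ)^(-(1:ℝ)-ε/10)) ^ T.card
        = (𝒜₂.card : ℝ) * (C₂ * (N:ℝ)^(-(1:ℝ)-ε/10)) ^ (r-1) := by
      have hc : ∀ T ∈ 𝒜₂, (C₂ * (N:ℝ)^(-(1:ℝ)-ε/10)) ^ T.card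
          = (C₂ * (N:ℝ)^(-(1:ℝ)-ε/10)) ^ (r-1) := by
        intro T hT
        rw [Finset.mem_powersetCard_univ.1 (Finset.mem_filter.1 (by rwa [h𝒜₂] at hT)).1]
      rw [Finset.sum_congr rfl hc, Finset.sum_const, nsmul_eq_mul]
    have hMle : Fintype.card {p : Fin N × Fin N // p.1 ≤ p.2} ≤ N^2 := by
      calc Fintype.card {p : Fin N × Fin N // p.1 ≤ p.2}
          ≤ Fintype.card (Fin N × Fin N) := Fintype.card_subtype_le _
        _ = N*N := by rw [Fintype.card_prod, Fintype.card_fin]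
        _ = N^2 := (sq N).symm
    have hb1 := bound_one_core ε C₂ (N:ℝ) (Real.log N) (Real.log (Real.log N)) N
      (Fintype.card {p : Fin N × Fin N // p.1 ≤ p.2}) (⌈(N:ℝ)^(1-ε/20)⌉₊) m₂
      hε0 hε1 hC₂ rfl rfl rfl rfl hm₂_def hMle hN3 hE2 hE3 hE5
    have hA2card : 𝒜₂.card ≤ (r + 1) * N^r * 2^(r^2) := by
      rw [h𝒜₂]; exact countA2 (by omega)
    have hb2 := bound_two_core ε C₂ (N:ℝ) (Real.log N) (Real.log (Real.log N)) N
      𝒜₂.card r hε0 hε1 hC₂ rfl rfl rfl hr_def hN3 hE1 hA2card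
    have hZpos : 0 < (N:ℝ)^(-(ε/40 * Real.log (Real.log N))) :=
      Real.rpow_pos_of_pos (by exact_mod_cast hN) _
    calc (μ {ω | Inadmissible ε (L ω)}).toReal
        ≤ (∑ T ∈ 𝒜₁, (C₂ * (N:ℝ)^(-(1:ℝ)-ε/10)) ^ T.card) +
          (∑ T ∈ 𝒜₂, (C₂ * (N:ℝ)^(-(1:ℝ)-ε/10)) ^ T.card) := hsplit
      _ = ((Fintype.card {p : Fin N × Fin N // p.1 ≤ p.2}).choose m₂ : ℝ) *
            (C₂ * (N:ℝ)^(-(1:ℝ)-ε/10)) ^ m₂ +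
          (𝒜₂.card : ℝ) * (C₂ * (N:ℝ)^(-(1:ℝ)-ε/10)) ^ (r-1) := by rw [hsum1, hsum2]
      _ ≤ 1/2 * (N:ℝ)^(-(ε/40 * Real.log (Real.log N))) +
          1/2 * (N:ℝ)^(-(ε/40 * Real.log (Real.log N))) := add_le_add hb1 hb2
      _ = (N:ℝ)^(-(ε/40 * Real.log (Real.log N))) := by ring
      _ < (((max N₁ 3 : ℕ):ℝ)^(ε/40 * Real.log (Real.log (max N₁ 3 : ℕ))) + 2) *
          (N:ℝ)^(-(ε/40 * Real.log (Real.log N))) := by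
        have h := mul_lt_mul_of_pos_right (show (1:ℝ) <
          ((max N₁ 3 : ℕ):ℝ)^(ε/40 * Real.log (Real.log (max N₁ 3 : ℕ))) + 2 by linarith)
          hZpos
        rw [one_mul] at h
        exact h
  · -- small case: N < max N₁ 3
    have hμΔ : (μ {ω | Inadmissible ε (L ω)}).toReal ≤ 1 := by
      have h := prob_le_one (μ := μ) (s := {ω | Inadmissible ε (L ω)})
      have h2 := ENNReal.toReal_mono (by simp) h
      simpa using h2
    have hNlt : N < max N₁ 3 := not_le.1 hNbig
    suffices h : 1 < (((max N₁ 3 : ℕ):ℝ)^(ε/40 * Real.log (Real.log (max N₁ 3 : ℕ))) + 2) *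
        (N:ℝ)^(-(ε/40 * Real.log (Real.log N))) by linarith
    by_cases hlam0 : Real.log (Real.log N) ≤ 0
    · have hb : (1:ℝ) ≤ (N:ℝ)^(-(ε/40 * Real.log (Real.log N))) := by
        apply Real.one_le_rpow hn1
        nlinarith
      have hprod := mul_le_mul hCge2 hb (by norm_num) (by linarith)
      linarith
    · push_neg at hlam0
      have hNN₀ : (N:ℝ) ≤ ((max N₁ 3 : ℕ):ℝ) := by exact_mod_cast hNlt.le
      have hN₀1 : (1:ℝ) ≤ ((max N₁ 3 : ℕ):ℝ) := by
        have h : (1:ℕ) ≤ max N₁ 3 := by omega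
        exact_mod_cast h
      have hlogN0 : 0 < Real.log N := by
        rcases lt_or_ge 0 (Real.log N) with h | h
        · exact h
        · exfalso
          have h0 : 0 ≤ Real.log N := Real.log_nonneg hn1
          have he : Real.log (N:ℝ) = 0 := le_antisymm h h0
          rw [he, Real.log_zero] at hlam0
          exact lt_irrefl 0 hlam0
      have hlam0mono : Real.log (Real.log N) ≤ Real.log (Real.log (max N₁ 3 : ℕ)) :=
        Real.log_le_log hlogN0 (Real.log_le_log (by exact_mod_cast hN) hNN₀)
      have hexp0 : 0 ≤ ε/40 * Real.log (Real.log N) := mul_nonneg (by linarith) hlam0.le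
      have h1' : (N:ℝ)^(ε/40 * Real.log (Real.log N)) ≤
          ((max N₁ 3 : ℕ):ℝ)^(ε/40 * Real.log (Real.log (max N₁ 3 : ℕ))) := by
        calc (N:ℝ)^(ε/40 * Real.log (Real.log N))
            ≤ ((max N₁ 3 : ℕ):ℝ)^(ε/40 * Real.log (Real.log N)) :=
              Real.rpow_le_rpow (by positivity) hNN₀ hexp0
          _ ≤ ((max N₁ 3 : ℕ):ℝ)^(ε/40 * Real.log (Real.log (max N₁ 3 : ℕ))) :=
              Real.rpow_le_rpow_of_exponent_le hN₀1
                (mul_le_mul_of_nonneg_left hlam0mono (by linarith))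
      have hpos : 0 < (N:ℝ)^(ε/40 * Real.log (Real.log N)) :=
        Real.rpow_pos_of_pos (by exact_mod_cast hN) _
      rw [Real.rpow_neg (by positivity : (0:ℝ) ≤ (N:ℝ))]
      have hlt : (N:ℝ)^(ε/40 * Real.log (Real.log N)) <
          ((max N₁ 3 : ℕ):ℝ)^(ε/40 * Real.log (Real.log (max N₁ 3 : ℕ))) + 2 := by linarith
      have h := mul_lt_mul_of_pos_right hlt (inv_pos.2 hpos)
      rw [mul_inv_cancel₀ (ne_of_gt hpos)] at h
      exact h
end
end

section
/- Fix E ∈ ℝ, real numbers η, η' > 0, a positive integer N, and an N×N real symmetric matrix H. Set z = E + iη and z' = E + i(η + η'), and let G = (H − z)^{−1} with entries G_{jk} and G' = (H − z')^{−1} with entries G'_{jk}. Then for all j, k ∈ [1, N], |G'_{jk} − G_{jk}| ≤ (η'/(2η)) ( |Im G'_{jj}| + |Im G_{kk}| ). -/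
noncomputable section

/-- Resolvent of a real matrix at a complex spectral parameter. -/
def resMat {m : Type*} [Fintype m] [DecidableEq m] (A : Matrix m m ℝ) (z : ℂ) :
    Matrix m m ℂ :=
  ((A.map (fun x => (x : ℂ))) - z • (1 : Matrix m m ℂ))⁻¹

set_option linter.unusedSectionVars false
set_option linter.unusedVariables false
set_option linter.unusedTactic false
set_option linter.deprecated false

namespace ResAux
open Matrix Complex

variable {n : Type*} [Fintype n] [DecidableEq n]

def sh (A : Matrix n n ℝ) (z : ℂ) : Matrix n n ℂ :=
  (A.map (fun x => (x : ℂ))) - z • (1 : Matrix n n ℂ)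

lemma map_herm {A : Matrix n n ℝ} (hA : A.IsSymm) :
    (A.map (fun x => (x : ℂ))).IsHermitian := by
  ext i j
  simp only [conjTranspose_apply, map_apply, star_def]
  rw [Complex.conj_ofReal]
  exact congrArg _ (congrFun (congrFun hA i) j)

lemma sh_conjTranspose {A : Matrix n n ℝ} (hA : A.IsSymm) (z : ℂ) :
    (sh A z)ᴴ = sh A (starRingEnd ℂ z) := by
  unfold sh
  rw [conjTranspose_sub, (map_herm hA)]
  rw [conjTranspose_smul, conjTranspose_one]
  rfl

lemma isUnit_sh {A : Matrix n n ℝ} (hA : A.IsSymm) {z : ℂ} (hz : z.im ≠ 0) :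
    IsUnit (sh A z) := by
  rw [← Matrix.mulVec_injective_iff_isUnit]
  have key : ∀ x : n → ℂ, (sh A z).mulVec x = 0 → x = 0 := by
    intro x hx
    set B := A.map (fun x => (x : ℂ)) with hB
    have hBH : Bᴴ = B := map_herm hA
    have h1 : (sh A z).mulVec x = B.mulVec x - z • x := by
      unfold sh
      rw [Matrix.sub_mulVec, Matrix.smul_mulVec, Matrix.one_mulVec]
    have h2 : star x ⬝ᵥ B.mulVec x = z * (star x ⬝ᵥ x) := by
      have := congrArg (fun v => star x ⬝ᵥ v) (h1 ▸ hx)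
      simpa [dotProduct_sub, dotProduct_smul, sub_eq_zero, smul_eq_mul] using this
    -- t := star x ⬝ᵥ B.mulVec x is real
    have ht : star x ⬝ᵥ B.mulVec x = star (star (B.mulVec x) ⬝ᵥ x) :=
      star_dotProduct x (B.mulVec x)
    rw [star_mulVec, hBH] at ht
    have ht2 : star (star x ⬝ᵥ B.mulVec x) = star x ⬝ᵥ B.mulVec x := by
      conv_lhs => rw [ht, star_star]
      rw [dotProduct_mulVec]
    -- s := star x ⬝ᵥ x is a nonneg real
    have hs_im : (star x ⬝ᵥ x).im = 0 := by
      have h' : star x ⬝ᵥ x = star (star x ⬝ᵥ x) := star_dotProduct x x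
      have := congrArg Complex.im h'
      simp only [Complex.star_def, Complex.conj_im] at this
      linarith
    have ht_im : (star x ⬝ᵥ B.mulVec x).im = 0 := by
      have := congrArg Complex.im ht2
      simp only [Complex.star_def, Complex.conj_im] at this
      linarith
    have him : (z * (star x ⬝ᵥ x)).im = 0 := by rw [← h2]; exact ht_im
    rw [Complex.mul_im, hs_im, mul_zero, zero_add] at him
    have hre : (star x ⬝ᵥ x).re = 0 := by
      rcases mul_eq_zero.mp him with h | h
      · exact absurd h hz
      · exact h
    have hdp : star x ⬝ᵥ x = ((∑ i, Complex.normSq (x i) : ℝ) : ℂ) := by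
      rw [dotProduct]
      push_cast
      refine Finset.sum_congr rfl fun i _ => ?_
      simp [Pi.star_apply, Complex.normSq_eq_conj_mul_self]
    have hsum : ∑ i, Complex.normSq (x i) = 0 := by
      have := congrArg Complex.re hdp
      simpa [hre] using this.symm
    funext i
    have := (Finset.sum_eq_zero_iff_of_nonneg
      (fun i _ => Complex.normSq_nonneg (x i))).mp hsum i (Finset.mem_univ i)
    simpa using Complex.normSq_eq_zero.mp this
  intro a b hab
  have : (sh A z).mulVec (a - b) = 0 := by
    rw [Matrix.mulVec_sub, hab, sub_self]
  have := key _ this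
  exact sub_eq_zero.mp this

lemma sh_mul_res {A : Matrix n n ℝ} (hA : A.IsSymm) {z : ℂ} (hz : z.im ≠ 0) :
    sh A z * (sh A z)⁻¹ = 1 :=
  Matrix.mul_nonsing_inv _ ((Matrix.isUnit_iff_isUnit_det _).mp (isUnit_sh hA hz))

lemma res_mul_sh {A : Matrix n n ℝ} (hA : A.IsSymm) {z : ℂ} (hz : z.im ≠ 0) :
    (sh A z)⁻¹ * sh A z = 1 :=
  Matrix.nonsing_inv_mul _ ((Matrix.isUnit_iff_isUnit_det _).mp (isUnit_sh hA hz))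

lemma res_ident {A : Matrix n n ℝ} (hA : A.IsSymm) {z z' : ℂ}
    (hz : z.im ≠ 0) (hz' : z'.im ≠ 0) :
    (sh A z')⁻¹ - (sh A z)⁻¹ = (z' - z) • ((sh A z')⁻¹ * (sh A z)⁻¹) := by
  set G := (sh A z)⁻¹
  set G' := (sh A z')⁻¹
  have hM : sh A z = sh A z' + (z' - z) • 1 := by
    unfold sh
    rw [sub_smul]
    abel
  have key : G' = G + (z' - z) • (G' * G) := by
    calc G' = G' * (sh A z * G) := by rw [sh_mul_res hA hz, mul_one]
    _ = G' * ((sh A z' + (z' - z) • 1) * G) := by rw [← hM]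
    _ = (G' * sh A z') * G + (z' - z) • (G' * G) := by
        rw [Matrix.add_mul, Matrix.smul_mul, Matrix.one_mul, Matrix.mul_add,
          Matrix.mul_smul, mul_assoc]
    _ = G + (z' - z) • (G' * G) := by rw [res_mul_sh hA hz', Matrix.one_mul]
  exact sub_eq_iff_eq_add'.mpr key

lemma res_conjTranspose {A : Matrix n n ℝ} (hA : A.IsSymm) (z : ℂ) :
    ((sh A z)⁻¹)ᴴ = (sh A (starRingEnd ℂ z))⁻¹ := by
  rw [Matrix.conjTranspose_nonsing_inv, sh_conjTranspose hA]

lemma ward_row {A : Matrix n n ℝ} (hA : A.IsSymm) {z : ℂ} (hz : z.im ≠ 0) (j : n) :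
    ((sh A z)⁻¹ j j).im = z.im * ∑ l, Complex.normSq ((sh A z)⁻¹ j l) := by
  have hzc : (starRingEnd ℂ z).im ≠ 0 := by simpa using hz
  have h := res_ident hA hzc hz (z' := z) (z := starRingEnd ℂ z)
  rw [← res_conjTranspose hA] at h
  have hjj := congrFun (congrFun h j) j
  set G := (sh A z)⁻¹
  have hGH : Gᴴ j j = starRingEnd ℂ (G j j) := rfl
  have hprod : (G * Gᴴ) j j = ((∑ l, Complex.normSq (G j l) : ℝ) : ℂ) := by
    rw [Matrix.mul_apply]
    push_cast
    refine Finset.sum_congr rfl fun l _ => ?_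
    rw [Matrix.conjTranspose_apply]
    simp [Complex.normSq_eq_conj_mul_self, mul_comm]
  have : G j j - starRingEnd ℂ (G j j) =
      (z - starRingEnd ℂ z) * ((∑ l, Complex.normSq (G j l) : ℝ) : ℂ) := by
    simpa [Matrix.sub_apply, Matrix.smul_apply, hGH, hprod, smul_eq_mul] using hjj
  have him := congrArg Complex.im this
  simp [Complex.sub_im, Complex.conj_im, Complex.mul_im] at him
  linarith

lemma ward_col {A : Matrix n n ℝ} (hA : A.IsSymm) {z : ℂ} (hz : z.im ≠ 0) (k : n) :
    ((sh A z)⁻¹ k k).im = z.im * ∑ l, Complex.normSq ((sh A z)⁻¹ l k) := by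
  have hzc : (starRingEnd ℂ z).im ≠ 0 := by simpa using hz
  have h := res_ident hA hz hzc (z' := starRingEnd ℂ z) (z := z)
  rw [← res_conjTranspose hA] at h
  have hkk := congrFun (congrFun h k) k
  set G := (sh A z)⁻¹
  have hGH : Gᴴ k k = starRingEnd ℂ (G k k) := rfl
  have hprod : (Gᴴ * G) k k = ((∑ l, Complex.normSq (G l k) : ℝ) : ℂ) := by
    rw [Matrix.mul_apply]
    push_cast
    refine Finset.sum_congr rfl fun l _ => ?_
    rw [Matrix.conjTranspose_apply]
    simp [Complex.normSq_eq_conj_mul_self]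
  have heq : starRingEnd ℂ (G k k) - G k k =
      (starRingEnd ℂ z - z) * ((∑ l, Complex.normSq (G l k) : ℝ) : ℂ) := by
    simpa [Matrix.sub_apply, Matrix.smul_apply, hGH, hprod, smul_eq_mul] using hkk
  have him := congrArg Complex.im heq
  simp [Complex.sub_im, Complex.conj_im, Complex.mul_im] at him
  linarith

end ResAux

theorem resolvent_continuity
    (E η η' : ℝ) (hη : 0 < η) (hη' : 0 < η')
    (N : ℕ) (hN : 0 < N)
    (H : Matrix (Fin N) (Fin N) ℝ) (hH : H.IsSymm) :
    ∀ j k : Fin N,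
      ‖resMat H ((E : ℂ) + (η + η') * Complex.I) j k -
          resMat H ((E : ℂ) + η * Complex.I) j k‖ ≤
        η' / (2 * η) *
          (|(resMat H ((E : ℂ) + (η + η') * Complex.I) j j).im| +
            |(resMat H ((E : ℂ) + η * Complex.I) k k).im|) := by
  intro j k
  open ResAux Complex in
  set z : ℂ := (E : ℂ) + η * Complex.I with hzdef
  set z' : ℂ := (E : ℂ) + (η + η') * Complex.I with hz'def
  have hzim : z.im = η := by simp [hzdef]
  have hz'im : z'.im = η + η' := by simp [hz'def]
  have hzne : z.im ≠ 0 := by rw [hzim]; exact ne_of_gt hη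
  have hz'ne : z'.im ≠ 0 := by rw [hz'im]; positivity
  have hres : ∀ w : ℂ, resMat H w = (sh H w)⁻¹ := fun _ => rfl
  set G : Matrix (Fin N) (Fin N) ℂ := (sh H z)⁻¹ with hG
  set G' : Matrix (Fin N) (Fin N) ℂ := (sh H z')⁻¹ with hG'
  show ‖G' j k - G j k‖ ≤
      η' / (2 * η) * (|(G' j j).im| + |(G k k).im|)
  have hid := res_ident hH hzne hz'ne
  have hdiff : G' j k - G j k = (z' - z) * ∑ l, G' j l * G l k := by
    have h := congrFun (congrFun hid j) k
    simpa [Matrix.sub_apply, Matrix.smul_apply, Matrix.mul_apply, smul_eq_mul] using h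
  have hzz' : z' - z = (η' : ℂ) * Complex.I := by
    rw [hzdef, hz'def]; push_cast; ring
  set a : ℝ := ∑ l, Complex.normSq (G' j l) with ha
  set b : ℝ := ∑ l, Complex.normSq (G l k) with hb
  have ha0 : 0 ≤ a := Finset.sum_nonneg fun l _ => Complex.normSq_nonneg _
  have hb0 : 0 ≤ b := Finset.sum_nonneg fun l _ => Complex.normSq_nonneg _
  have hwr : (G' j j).im = (η + η') * a := by
    have := ward_row hH hz'ne j; rwa [hz'im] at this
  have hwc : (G k k).im = η * b := by
    have := ward_col hH hzne k; rwa [hzim] at this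
  -- bound the sum via Cauchy-Schwarz
  have h1 : ‖∑ l, G' j l * G l k‖ ≤
      ∑ l, ‖G' j l‖ * ‖G l k‖ := by
    refine le_trans (norm_sum_le _ _) (le_of_eq ?_)
    exact Finset.sum_congr rfl fun l _ => norm_mul _ _
  have h2 : (∑ l, ‖G' j l‖ * ‖G l k‖) ^ 2 ≤ a * b := by
    have := Finset.sum_mul_sq_le_sq_mul_sq Finset.univ
      (fun l => ‖G' j l‖) (fun l => ‖G l k‖)
    simpa [Complex.sq_norm, ha, hb] using this
  have hsum0 : 0 ≤ ∑ l, ‖G' j l‖ * ‖G l k‖ :=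
    Finset.sum_nonneg fun l _ => mul_nonneg (norm_nonneg _) (norm_nonneg _)
  have h3 : ∑ l, ‖G' j l‖ * ‖G l k‖ ≤
      Real.sqrt a * Real.sqrt b := by
    rw [← Real.sqrt_mul_self hsum0, ← Real.sqrt_mul ha0]
    exact Real.sqrt_le_sqrt (by nlinarith)
  have habs : ‖G' j k - G j k‖ ≤ η' * (Real.sqrt a * Real.sqrt b) := by
    rw [hdiff, hzz', norm_mul, norm_mul, Complex.norm_I, Complex.norm_real, Real.norm_eq_abs,
      abs_of_pos hη', mul_one]
    exact mul_le_mul_of_nonneg_left (le_trans h1 h3) (le_of_lt hη')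
  refine le_trans habs ?_
  rw [hwr, hwc, _root_.abs_of_nonneg (by positivity : (0:ℝ) ≤ (η + η') * a),
    _root_.abs_of_nonneg (by positivity : (0:ℝ) ≤ η * b),
    div_mul_eq_mul_div, le_div_iff₀ (by positivity)]
  have hsq_a := Real.sq_sqrt ha0
  have hsq_b := Real.sq_sqrt hb0
  have hA := Real.sqrt_nonneg a
  have hB := Real.sqrt_nonneg b
  have amgm : 2 * (Real.sqrt a * Real.sqrt b) ≤ a + b := by
    nlinarith [sq_nonneg (Real.sqrt a - Real.sqrt b)]
  have hmul := mul_le_mul_of_nonneg_left amgm (mul_pos hη hη').le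
  nlinarith [mul_nonneg (mul_pos hη' hη').le ha0]
end
end

section
/- Fix E ∈ ℝ, real numbers η, η' > 0, a positive integer N, and an N×N real symmetric matrix H. Set z = E + iη and z' = E + i(η + η'), and let G = (H − z)^{−1} and G' = (H − z')^{−1}. Then for every j ∈ [1, N], min{|G'_{jj}|, |G_{jj}|} / max{|G'_{jj}|, |G_{jj}|} > 1 − η'/η. -/
noncomputable section

open Matrix Complex Finset

namespace ResAux

variable {N : ℕ}

lemma cm_isHermitian {H : Matrix (Fin N) (Fin N) ℝ} (hH : H.IsSymm) :
    (H.map (fun x => (x : ℂ))).IsHermitian := by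
  ext i j
  simp only [conjTranspose_apply, map_apply, star_def, Complex.conj_ofReal]
  exact congrArg _ (hH.apply i j)

lemma det_isUnit {H : Matrix (Fin N) (Fin N) ℝ} (hH : H.IsSymm) {z : ℂ} (hz : z.im ≠ 0) :
    IsUnit (H.map (fun x => (x : ℂ)) - z • (1 : Matrix (Fin N) (Fin N) ℂ)).det := by
  rw [← Matrix.isUnit_iff_isUnit_det, ← Matrix.mulVec_injective_iff_isUnit]
  set A := H.map (fun x => (x : ℂ)) with hA
  have hAH := cm_isHermitian hH
  have key : ∀ v, (A - z • 1) *ᵥ v = 0 → v = 0 := by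
    intro v hv
    have h1 : A *ᵥ v = z • v := by
      rwa [Matrix.sub_mulVec, Matrix.smul_mulVec, Matrix.one_mulVec, sub_eq_zero] at hv
    have hs : star v ⬝ᵥ (A *ᵥ v) = z * (star v ⬝ᵥ v) := by
      rw [h1, dotProduct_smul, smul_eq_mul]
    have hreal : star (star v ⬝ᵥ (A *ᵥ v)) = star v ⬝ᵥ (A *ᵥ v) := by
      conv_lhs => rw [star_dotProduct, star_star, star_mulVec, hAH.eq,
        ← dotProduct_mulVec]
    have hc : star (star v ⬝ᵥ v) = star v ⬝ᵥ v := by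
      conv_lhs => rw [star_dotProduct, star_star]
    rw [hs, star_mul', hc] at hreal
    have hzz : (star z - z) * (star v ⬝ᵥ v) = 0 := by
      rw [sub_mul, hreal, sub_self]
    have hzne : star z - z ≠ 0 := by
      intro h
      apply hz
      have := congrArg Complex.im h
      simp at this
      linarith
    have hc0 : star v ⬝ᵥ v = 0 := by
      rcases mul_eq_zero.mp hzz with h | h
      · exact absurd h hzne
      · exact h
    have hsum : (∑ i, (Complex.normSq (v i) : ℂ)) = 0 := by
      rw [← hc0]
      simp only [dotProduct, Pi.star_apply]
      refine Finset.sum_congr rfl fun i _ => ?_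
      rw [mul_comm, Complex.star_def, Complex.mul_conj]
    have hsumr : (∑ i, Complex.normSq (v i)) = 0 := by exact_mod_cast hsum
    funext i
    have := (Finset.sum_eq_zero_iff_of_nonneg
      (fun i _ => Complex.normSq_nonneg (v i))).mp hsumr i (Finset.mem_univ i)
    exact Complex.normSq_eq_zero.mp this
  intro x y hxy
  have := key (x - y) (by rw [Matrix.mulVec_sub, hxy, sub_self])
  exact sub_eq_zero.mp this

lemma inv_sub_inv'' (M₁ M₂ : Matrix (Fin N) (Fin N) ℂ)
    (h₁ : IsUnit M₁.det) (h₂ : IsUnit M₂.det) :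
    M₂⁻¹ - M₁⁻¹ = M₁⁻¹ * (M₁ - M₂) * M₂⁻¹ := by
  rw [Matrix.mul_sub, Matrix.nonsing_inv_mul _ h₁, Matrix.sub_mul, one_mul,
    Matrix.mul_assoc, Matrix.mul_nonsing_inv _ h₂, Matrix.mul_one]

lemma res_symm {H : Matrix (Fin N) (Fin N) ℝ} (hH : H.IsSymm) (z : ℂ) (a b : Fin N) :
    resMat H z a b = resMat H z b a := by
  have h1 : ((H.map (fun x => (x : ℂ))) - z • (1 : Matrix (Fin N) (Fin N) ℂ))ᵀ
      = (H.map (fun x => (x : ℂ))) - z • 1 := by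
    rw [Matrix.transpose_sub, Matrix.transpose_smul, Matrix.transpose_one]
    congr 1
    ext i j
    simp only [transpose_apply, map_apply]
    exact congrArg _ (hH.apply i j)
  have : (resMat H z)ᵀ = resMat H z := by
    rw [resMat, Matrix.transpose_nonsing_inv, h1]
  conv_lhs => rw [← this]
  rfl

lemma ward {H : Matrix (Fin N) (Fin N) ℝ} (hH : H.IsSymm) (E : ℝ) {t : ℝ} (ht : t ≠ 0)
    (j : Fin N) :
    (resMat H ((E : ℂ) + t * I) j j).im
      = t * ∑ k, Complex.normSq (resMat H ((E : ℂ) + t * I) j k) := by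
  set z : ℂ := (E : ℂ) + t * I with hz
  have hzim : z.im = t := by simp [hz]
  set A := H.map (fun x => (x : ℂ)) with hA
  have hAH := cm_isHermitian hH
  set M : Matrix (Fin N) (Fin N) ℂ := A - z • 1 with hM
  set Mc : Matrix (Fin N) (Fin N) ℂ := A - star z • 1 with hMc
  have hres : resMat H z = M⁻¹ := rfl
  have hMu : IsUnit M.det := det_isUnit hH (by rw [hzim]; exact ht)
  have hMcu : IsUnit Mc.det := det_isUnit hH (by simp [hzim]; exact ht)
  have hMH : Mᴴ = Mc := by
    rw [hM, conjTranspose_sub, hAH.eq, conjTranspose_smul, conjTranspose_one, hMc]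
  have hGH : M⁻¹ᴴ = Mc⁻¹ := by rw [Matrix.conjTranspose_nonsing_inv, hMH]
  have hdiff : Mc - M = (z - star z) • 1 := by
    rw [hMc, hM, sub_smul]; abel
  have key : M⁻¹ - Mc⁻¹ = (z - star z) • (Mc⁻¹ * M⁻¹) := by
    rw [inv_sub_inv'' Mc M hMcu hMu, hdiff, Matrix.mul_smul, Matrix.mul_one,
      Matrix.smul_mul]
  have hjj := congrFun (congrFun key j) j
  simp only [Matrix.sub_apply, Matrix.smul_apply, Matrix.mul_apply, smul_eq_mul] at hjj
  have hMcapp : ∀ a b, Mc⁻¹ a b = star (M⁻¹ b a) := by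
    intro a b; rw [← hGH, conjTranspose_apply]
  rw [hMcapp j j] at hjj
  have hsum : (∑ k, Mc⁻¹ j k * M⁻¹ k j)
      = ((∑ k, Complex.normSq (M⁻¹ j k) : ℝ) : ℂ) := by
    push_cast
    refine Finset.sum_congr rfl fun k _ => ?_
    rw [hMcapp j k, ← hres, res_symm hH z k j, Complex.star_def, mul_comm,
      Complex.mul_conj]
  rw [hsum] at hjj
  have hsubc : M⁻¹ j j - star (M⁻¹ j j) = ((2 * (M⁻¹ j j).im : ℝ) : ℂ) * I :=
    Complex.sub_conj _
  have hzsub : z - star z = ((2 * t : ℝ) : ℂ) * I := by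
    have := Complex.sub_conj z
    rw [hzim] at this
    exact this
  rw [hsubc, hzsub] at hjj
  have hI : ((2 * (M⁻¹ j j).im : ℝ) : ℂ)
      = ((2 * t * (∑ k, Complex.normSq (M⁻¹ j k)) : ℝ) : ℂ) := by
    have h2 : ((2 * (M⁻¹ j j).im : ℝ) : ℂ) * I
        = ((2 * t * (∑ k, Complex.normSq (M⁻¹ j k)) : ℝ) : ℂ) * I := by
      rw [hjj]; push_cast; ring
    exact mul_right_cancel₀ Complex.I_ne_zero h2
  have := Complex.ofReal_inj.mp hI
  rw [hres]
  linarith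

lemma im_aux (E t : ℝ) : ((E : ℂ) + t * I).im = t := by simp

lemma sum_normSq_pos {H : Matrix (Fin N) (Fin N) ℝ} (hH : H.IsSymm) (E : ℝ) {t : ℝ}
    (ht : t ≠ 0) (j : Fin N) :
    0 < ∑ k, Complex.normSq (resMat H ((E : ℂ) + t * I) j k) := by
  set z : ℂ := (E : ℂ) + t * I with hz
  set M : Matrix (Fin N) (Fin N) ℂ := H.map (fun x => (x : ℂ)) - z • 1 with hM
  have hMu : IsUnit M.det := det_isUnit hH (by rw [im_aux]; exact ht)
  have hres : resMat H z = M⁻¹ := rfl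
  have hone : (M⁻¹ * M) j j = 1 := by
    rw [Matrix.nonsing_inv_mul _ hMu, Matrix.one_apply_eq]
  have hex : ∃ k, resMat H z j k ≠ 0 := by
    by_contra hno
    push_neg at hno
    rw [Matrix.mul_apply] at hone
    have : ∀ k ∈ Finset.univ, M⁻¹ j k * M k j = 0 := by
      intro k _
      rw [← hres, hno k, zero_mul]
    rw [Finset.sum_eq_zero this] at hone
    exact zero_ne_one hone
  obtain ⟨k, hk⟩ := hex
  exact Finset.sum_pos' (fun i _ => Complex.normSq_nonneg _)
    ⟨k, Finset.mem_univ k, Complex.normSq_pos.mpr hk⟩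

lemma im_pos {H : Matrix (Fin N) (Fin N) ℝ} (hH : H.IsSymm) (E : ℝ) {t : ℝ}
    (ht : 0 < t) (j : Fin N) :
    0 < (resMat H ((E : ℂ) + t * I) j j).im := by
  rw [ward hH E ht.ne' j]
  exact mul_pos ht (sum_normSq_pos hH E ht.ne' j)

lemma abs_pos' {H : Matrix (Fin N) (Fin N) ℝ} (hH : H.IsSymm) (E : ℝ) {t : ℝ}
    (ht : 0 < t) (j : Fin N) :
    0 < ‖resMat H ((E : ℂ) + t * I) j j‖ :=
  lt_of_lt_of_le (lt_of_lt_of_le (im_pos hH E ht j) (le_abs_self _))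
    (Complex.abs_im_le_norm _)

lemma res_diff {H : Matrix (Fin N) (Fin N) ℝ} (hH : H.IsSymm) (E : ℝ) {s t : ℝ}
    (hs : s ≠ 0) (ht : t ≠ 0) (j : Fin N) :
    resMat H ((E : ℂ) + t * I) j j - resMat H ((E : ℂ) + s * I) j j
      = (((t - s : ℝ) : ℂ) * I) *
        ∑ k, resMat H ((E : ℂ) + s * I) j k * resMat H ((E : ℂ) + t * I) k j := by
  set z : ℂ := (E : ℂ) + s * I with hz
  set z' : ℂ := (E : ℂ) + t * I with hz'
  set M : Matrix (Fin N) (Fin N) ℂ := H.map (fun x => (x : ℂ)) - z • 1 with hM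
  set M' : Matrix (Fin N) (Fin N) ℂ := H.map (fun x => (x : ℂ)) - z' • 1 with hM'
  have hMu : IsUnit M.det := det_isUnit hH (by rw [im_aux]; exact hs)
  have hM'u : IsUnit M'.det := det_isUnit hH (by rw [im_aux]; exact ht)
  have hdiff : M - M' = (z' - z) • 1 := by rw [hM, hM', sub_smul]; abel
  have key : M'⁻¹ - M⁻¹ = (z' - z) • (M⁻¹ * M'⁻¹) := by
    rw [inv_sub_inv'' M M' hMu hM'u, hdiff, Matrix.mul_smul, Matrix.mul_one,
      Matrix.smul_mul]
  have hjj := congrFun (congrFun key j) j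
  simp only [Matrix.sub_apply, Matrix.smul_apply, Matrix.mul_apply, smul_eq_mul] at hjj
  have hzz : z' - z = ((t - s : ℝ) : ℂ) * I := by
    rw [hz, hz']; push_cast; ring
  rw [← hzz]
  exact hjj

lemma final_aux {a b η η' s : ℝ} (ha : 0 < a) (hab : a ≤ b) (hη : 0 < η) (hη' : 0 < η')
    (hs : η < s) (hd : b - a ≤ η' * (Real.sqrt (a * b) / s)) :
    1 - η' / η < a / b := by
  have hb : 0 < b := lt_of_lt_of_le ha hab
  have h4 : Real.sqrt (a * b) ≤ b := by
    have h : a * b ≤ b ^ 2 := by nlinarith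
    calc Real.sqrt (a * b) ≤ Real.sqrt (b ^ 2) := Real.sqrt_le_sqrt h
      _ = b := Real.sqrt_sq hb.le
  have hspos : (0 : ℝ) < s := hη.trans hs
  have h5 : b - a ≤ η' * (b / s) := le_trans hd (by gcongr)
  have h6 : η' * (b / s) < η' * (b / η) := by
    apply mul_lt_mul_of_pos_left _ hη'
    exact div_lt_div_of_pos_left hb hη hs
  rw [lt_div_iff₀ hb]
  have h7 : (1 - η' / η) * b = b - η' * (b / η) := by field_simp
  linarith

lemma final_arith {a b η η' s : ℝ} (ha : 0 < a) (hb : 0 < b) (hη : 0 < η) (hη' : 0 < η')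
    (hs : η < s) (hd : |a - b| ≤ η' * (Real.sqrt (a * b) / s)) :
    1 - η' / η < min a b / max a b := by
  rcases le_total a b with h | h
  · rw [min_eq_left h, max_eq_right h]
    refine final_aux ha h hη hη' hs ?_
    rwa [abs_sub_comm, _root_.abs_of_nonneg (sub_nonneg.2 h)] at hd
  · rw [min_eq_right h, max_eq_left h]
    refine final_aux hb h hη hη' hs ?_
    rw [mul_comm a b] at hd
    rwa [_root_.abs_of_nonneg (sub_nonneg.2 h)] at hd

end ResAux

open ResAux

theorem resolvent_diagonal_ratio
    (E η η' : ℝ) (hη : 0 < η) (hη' : 0 < η')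
    (N : ℕ) (hN : 0 < N)
    (H : Matrix (Fin N) (Fin N) ℝ) (hH : H.IsSymm) :
    ∀ j : Fin N,
      1 - η' / η <
        min (‖resMat H ((E : ℂ) + (η + η') * Complex.I) j j‖)
            (‖resMat H ((E : ℂ) + η * Complex.I) j j‖) /
          max (‖resMat H ((E : ℂ) + (η + η') * Complex.I) j j‖)
            (‖resMat H ((E : ℂ) + η * Complex.I) j j‖) := by
  intro j
  have htt : (0 : ℝ) < η + η' := by linarith
  have hcast : (E : ℂ) + (↑η + ↑η') * I = (E : ℂ) + ((η + η' : ℝ) : ℂ) * I := by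
    push_cast; ring
  rw [hcast]
  set G' := resMat H ((E : ℂ) + ((η + η' : ℝ) : ℂ) * I) with hG'
  set G := resMat H ((E : ℂ) + (η : ℂ) * I) with hG
  set a := ‖G' j j‖ with ha
  set b := ‖G j j‖ with hb
  have hapos : 0 < a := abs_pos' hH E htt j
  have hbpos : 0 < b := abs_pos' hH E hη j
  set Sa := ∑ k, Complex.normSq (G' j k) with hSa
  set Sb := ∑ k, Complex.normSq (G j k) with hSb
  have hwa : (G' j j).im = (η + η') * Sa := ward hH E htt.ne' j
  have hwb : (G j j).im = η * Sb := ward hH E hη.ne' j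
  have hSapos : 0 < Sa := sum_normSq_pos hH E htt.ne' j
  have hSbpos : 0 < Sb := sum_normSq_pos hH E hη.ne' j
  have hSa_le : Sa ≤ a / (η + η') := by
    rw [le_div_iff₀ htt, mul_comm, ← hwa]
    exact le_trans (le_abs_self _) (Complex.abs_im_le_norm _)
  have hSb_le : Sb ≤ b / η := by
    rw [le_div_iff₀ hη, mul_comm, ← hwb]
    exact le_trans (le_abs_self _) (Complex.abs_im_le_norm _)
  have hdiff := res_diff hH E hη.ne' htt.ne' j
  have habs : ‖G' j j - G j j‖ ≤ η' * (Real.sqrt Sb * Real.sqrt Sa) := by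
    rw [show G' j j - G j j
        = (((η + η' - η : ℝ) : ℂ) * I) * ∑ k, G j k * G' k j from hdiff]
    rw [norm_mul, norm_mul, Complex.norm_I, Complex.norm_real, Real.norm_eq_abs, mul_one]
    have h1 : |η + η' - η| = η' := by rw [add_sub_cancel_left, abs_of_pos hη']
    rw [h1]
    have hCS : ‖∑ k, G j k * G' k j‖ ≤ Real.sqrt Sb * Real.sqrt Sa := by
      calc ‖∑ k, G j k * G' k j‖
          ≤ ∑ k, ‖G j k * G' k j‖ := norm_sum_le _ _
        _ = ∑ k, ‖G j k‖ * ‖G' j k‖ := by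
            have hsym : ∀ k : Fin N, G' k j = G' j k := by
              intro k; rw [hG']; exact res_symm hH _ k j
            refine Finset.sum_congr rfl fun k _ => ?_
            rw [norm_mul, hsym k]
        _ ≤ Real.sqrt Sb * Real.sqrt Sa := by
            have hsq : (∑ k, ‖G j k‖ * ‖G' j k‖) ^ 2
                ≤ Sb * Sa := by
              have h := Finset.sum_mul_sq_le_sq_mul_sq Finset.univ
                (fun k => ‖G j k‖) (fun k => ‖G' j k‖)
              simpa only [Complex.sq_norm] using h
            have hnn : 0 ≤ ∑ k, ‖G j k‖ * ‖G' j k‖ :=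
              Finset.sum_nonneg fun k _ =>
                mul_nonneg (norm_nonneg _) (norm_nonneg _)
            calc (∑ k, ‖G j k‖ * ‖G' j k‖)
                = Real.sqrt ((∑ k, ‖G j k‖ * ‖G' j k‖) ^ 2) :=
                  (Real.sqrt_sq hnn).symm
              _ ≤ Real.sqrt (Sb * Sa) := Real.sqrt_le_sqrt hsq
              _ = Real.sqrt Sb * Real.sqrt Sa := Real.sqrt_mul hSbpos.le _
    exact mul_le_mul_of_nonneg_left hCS hη'.le
  have hsqrt_chain : Real.sqrt Sb * Real.sqrt Sa
      ≤ Real.sqrt (a * b) / Real.sqrt (η * (η + η')) := by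
    have h1 : Real.sqrt Sb * Real.sqrt Sa
        ≤ Real.sqrt (b / η) * Real.sqrt (a / (η + η')) := by
      gcongr <;> first
        | exact Real.sqrt_le_sqrt hSb_le
        | exact Real.sqrt_le_sqrt hSa_le
        | positivity
    have h2 : Real.sqrt (b / η) * Real.sqrt (a / (η + η'))
        = Real.sqrt ((a * b) / (η * (η + η'))) := by
      rw [← Real.sqrt_mul (by positivity)]
      congr 1
      field_simp
    have h3 : Real.sqrt ((a * b) / (η * (η + η')))
        = Real.sqrt (a * b) / Real.sqrt (η * (η + η')) :=
      Real.sqrt_div (by positivity) _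
    rw [← h3, ← h2]
    exact h1
  have hsq_gt : η < Real.sqrt (η * (η + η')) := by
    have h := Real.sqrt_lt_sqrt (by positivity : (0:ℝ) ≤ η * η) (by nlinarith : η * η < η * (η + η'))
    rwa [Real.sqrt_mul_self hη.le] at h
  refine final_arith hapos hbpos hη hη' hsq_gt ?_
  calc |a - b| ≤ ‖G' j j - G j j‖ :=
        abs_norm_sub_norm_le _ _
    _ ≤ η' * (Real.sqrt Sb * Real.sqrt Sa) := habs
    _ ≤ η' * (Real.sqrt (a * b) / Real.sqrt (η * (η + η'))) := by gcongr
end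
end
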